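/- Let p be a projective line not tangent to a nondegenerate conic Φ, let U, V be its intersection points with Φ, and let A, B be points of p different from U, V. Then 4·(AB B_p A_p) = (UVAB) + (UVBA) + 2, where A_p, B_p are the conjugate points of A, B on p. -/

import Mathlib

/-- Cross ratio `(ABCD)` of four points of a (complex) projective line, given in an
affine coordinate on the line in which all the relevant points are finite. -/
noncomputable def crC (a b c d : ℂ) : ℂ := ((c - a) / (c - b)) / ((d - a) / (d - b))

/-- From the harmonic condition `(U V X Xp) = -1` we get a polynomial relation. -/
lemma harm_eq (U V X Xp : ℂ) (hUV : U ≠ V) (hXU : X ≠ U) (hXV : X ≠ V)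
    (h : crC U V X Xp = -1) :
    (X - U) * (Xp - V) + (X - V) * (Xp - U) = 0 := by
  have hU : Xp ≠ U := by
    rintro rfl
    simp only [crC, sub_self, zero_div, div_zero] at h
    exact absurd h (by norm_num)
  have hV : Xp ≠ V := by
    rintro rfl
    simp only [crC, sub_self, div_zero, zero_div] at h
    exact absurd h (by norm_num)
  have h1 : X - V ≠ 0 := sub_ne_zero.2 hXV
  have h2 : Xp - U ≠ 0 := sub_ne_zero.2 hU
  have h3 : Xp - V ≠ 0 := sub_ne_zero.2 hV
  unfold crC at h
  field_simp at h
  linear_combination h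

theorem four_crossRatio_identity (U V A B Ap Bp : ℂ)
    (hUV : U ≠ V) (hAU : A ≠ U) (hAV : A ≠ V) (hBU : B ≠ U) (hBV : B ≠ V) (hAB : A ≠ B)
    (hAp : crC U V A Ap = -1) (hBp : crC U V B Bp = -1) :
    4 * crC A B Bp Ap = crC U V A B + crC U V B A + 2 := by
  have eA := harm_eq U V A Ap hUV hAU hAV hAp
  have eB := harm_eq U V B Bp hUV hBU hBV hBp
  have huv : U - V ≠ 0 := sub_ne_zero.2 hUV
  have hau : A - U ≠ 0 := sub_ne_zero.2 hAU
  have hav : A - V ≠ 0 := sub_ne_zero.2 hAV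
  have hbu : B - U ≠ 0 := sub_ne_zero.2 hBU
  have hbv : B - V ≠ 0 := sub_ne_zero.2 hBV
  have hab : A - B ≠ 0 := sub_ne_zero.2 hAB
  have h2A : 2 * A - U - V ≠ 0 := by
    intro h
    have : (U - V) ^ 2 = 0 := by
      linear_combination (-2) * eA + (2 * Ap - U - V) * h
    exact huv (pow_eq_zero_iff (n := 2) (by norm_num) |>.mp this)
  have h2B : 2 * B - U - V ≠ 0 := by
    intro h
    have : (U - V) ^ 2 = 0 := by
      linear_combination (-2) * eB + (2 * Bp - U - V) * h
    exact huv (pow_eq_zero_iff (n := 2) (by norm_num) |>.mp this)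
  by_cases hS : (A - U) * (B - V) + (A - V) * (B - U) = 0
  · -- degenerate case: Ap = B and Bp = A
    have hApB : Ap = B := by
      have h : (Ap - B) * (2 * A - U - V) = 0 := by linear_combination eA - hS
      rcases mul_eq_zero.mp h with h | h
      · exact sub_eq_zero.mp h
      · exact absurd h h2A
    have hBpA : Bp = A := by
      have h : (Bp - A) * (2 * B - U - V) = 0 := by linear_combination eB - hS
      rcases mul_eq_zero.mp h with h | h
      · exact sub_eq_zero.mp h
      · exact absurd h h2B
    rw [hApB] at hAp
    rw [hBpA] at hBp
    rw [hApB, hBpA, hAp, hBp]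
    have l1 : crC A B A B = 0 := by
      simp [crC, sub_self]
    rw [l1]
    ring
  · -- generic case
    have hApA : Ap ≠ A := by
      rintro rfl
      exact (mul_ne_zero hau hav) (by linear_combination eA / 2)
    have hBpB : Bp ≠ B := by
      rintro rfl
      exact (mul_ne_zero hbu hbv) (by linear_combination eB / 2)
    have hApB : Ap ≠ B := by
      rintro rfl
      exact hS (by linear_combination eA)
    have hBpA : Bp ≠ A := by
      rintro rfl
      exact hS (by linear_combination eB)
    have hapa : Ap - A ≠ 0 := sub_ne_zero.2 hApA
    have hapb : Ap - B ≠ 0 := sub_ne_zero.2 hApB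
    have hbpa : Bp - A ≠ 0 := sub_ne_zero.2 hBpA
    have hbpb : Bp - B ≠ 0 := sub_ne_zero.2 hBpB
    set S := (A - U) * (B - V) + (A - V) * (B - U) with hSdef
    have q1 : (Bp - A) / (Bp - B) = S / (2 * (B - U) * (B - V)) := by
      rw [div_eq_div_iff hbpb (by exact mul_ne_zero (mul_ne_zero two_ne_zero hbu) hbv)]
      linear_combination (B - A) * eB
    have q2 : (Ap - A) / (Ap - B) = (2 * (A - U) * (A - V)) / S := by
      rw [div_eq_div_iff hapb hS]
      linear_combination (B - A) * eA
    have h1 : crC A B Bp Ap = S ^ 2 / (4 * ((A - U) * (A - V) * ((B - U) * (B - V)))) := by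
      rw [crC, q1, q2]
      rw [div_div_div_eq]
      field_simp
      ring
    rw [h1, crC, crC]
    field_simp
    ring
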